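/- Let n ≥ 1 and let A be a real 4×n matrix. Let Δₙ, Δ₄ and P be as above, and define the lower value v̲ = sup over p ∈ P of min over columns j of (pᵀA)ⱼ, and the upper value v̄ = inf over q ∈ Δₙ of sup over p ∈ P of pᵀ A q. Then v̲ = v̄ if and only if there exists p ∈ P with min over j of (pᵀA)ⱼ equal to the maximum over p' ∈ Δ₄ of min over j of (p'ᵀA)ⱼ, i.e., if and only if the maximum of p ↦ min_j (pᵀA)ⱼ over Δ₄ is attained at a point of product form. -/

import Mathlib

open Matrix
set_option maxHeartbeats 1000000

noncomputable def prodMix (p₁ p₂ : ℝ) : Fin 4 → ℝ :=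
  ![(1 - p₁) * (1 - p₂), (1 - p₁) * p₂, p₁ * (1 - p₂), p₁ * p₂]

def productMixtures : Set (Fin 4 → ℝ) :=
  {p | ∃ p₁ ∈ Set.Icc (0 : ℝ) 1, ∃ p₂ ∈ Set.Icc (0 : ℝ) 1, p = prodMix p₁ p₂}

lemma prodMix_mem_stdSimplex {a b : ℝ} (ha : a ∈ Set.Icc (0:ℝ) 1) (hb : b ∈ Set.Icc (0:ℝ) 1) :
    prodMix a b ∈ stdSimplex ℝ (Fin 4) := by
  obtain ⟨ha0, ha1⟩ := ha; obtain ⟨hb0, hb1⟩ := hb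
  constructor
  · intro i; fin_cases i <;> simp [prodMix] <;> nlinarith
  · simp [Fin.sum_univ_four, prodMix]; ring

lemma productMixtures_subset : productMixtures ⊆ stdSimplex ℝ (Fin 4) := by
  rintro p ⟨a, ha, b, hb, rfl⟩; exact prodMix_mem_stdSimplex ha hb

lemma single_mem_productMixtures (i : Fin 4) : Pi.single i 1 ∈ productMixtures := by
  fin_cases i
  · exact ⟨0, by norm_num, 0, by norm_num, by ext j; fin_cases j <;> simp [prodMix]⟩
  · exact ⟨0, by norm_num, 1, by norm_num, by ext j; fin_cases j <;> simp [prodMix]⟩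
  · exact ⟨1, by norm_num, 0, by norm_num, by ext j; fin_cases j <;> simp [prodMix]⟩
  · exact ⟨1, by norm_num, 1, by norm_num, by ext j; fin_cases j <;> simp [prodMix]⟩

lemma isCompact_productMixtures : IsCompact productMixtures := by
  have : productMixtures =
      (fun z : ℝ × ℝ => prodMix z.1 z.2) '' (Set.Icc 0 1 ×ˢ Set.Icc 0 1) := by
    ext p
    constructor
    · rintro ⟨a, ha, b, hb, rfl⟩; exact ⟨(a, b), ⟨ha, hb⟩, rfl⟩
    · rintro ⟨⟨a, b⟩, ⟨ha, hb⟩, rfl⟩; exact ⟨a, ha, b, hb, rfl⟩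
  rw [this]
  refine (isCompact_Icc.prod isCompact_Icc).image ?_
  apply continuous_pi
  intro i; fin_cases i <;> simp [prodMix] <;> fun_prop

variable {n : ℕ}

lemma mem_stdSimplex_le_one {m : ℕ} {p : Fin m → ℝ} (hp : p ∈ stdSimplex ℝ (Fin m)) (i : Fin m) :
    p i ≤ 1 := by
  have := Finset.single_le_sum (f := p) (fun j _ => hp.1 j) (Finset.mem_univ i)
  simpa [hp.2] using this

lemma vecMul_le_bound {A : Matrix (Fin 4) (Fin n) ℝ} {p : Fin 4 → ℝ}
    (hp : p ∈ stdSimplex ℝ (Fin 4)) (j : Fin n) :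
    Matrix.vecMul p A j ≤ ∑ i, ∑ j', |A i j'| := by
  have h1 : Matrix.vecMul p A j = ∑ i, p i * A i j := by
    simp [Matrix.vecMul, dotProduct]
  rw [h1]
  refine Finset.sum_le_sum fun i _ => ?_
  have h2 : p i * A i j ≤ |A i j| := by
    have := mem_stdSimplex_le_one hp i
    have := hp.1 i
    nlinarith [le_abs_self (A i j), abs_nonneg (A i j)]
  exact h2.trans (Finset.single_le_sum (f := fun j' => |A i j'|) (fun _ _ => abs_nonneg _)
    (Finset.mem_univ j))

lemma abs_dot_le_bound {A : Matrix (Fin 4) (Fin n) ℝ} {p : Fin 4 → ℝ} {q : Fin n → ℝ}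
    (hp : p ∈ stdSimplex ℝ (Fin 4)) (hq : q ∈ stdSimplex ℝ (Fin n)) :
    |p ⬝ᵥ A.mulVec q| ≤ ∑ i, ∑ j', |A i j'| := by
  have hAq : ∀ i, |A.mulVec q i| ≤ ∑ j', |A i j'| := by
    intro i
    have h1 : A.mulVec q i = ∑ j', A i j' * q j' := by
      simp [Matrix.mulVec, dotProduct]
    rw [h1]
    calc |∑ j', A i j' * q j'| ≤ ∑ j', |A i j' * q j'| := Finset.abs_sum_le_sum_abs _ _
      _ ≤ ∑ j', |A i j'| := by
          refine Finset.sum_le_sum fun j' _ => ?_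
          rw [abs_mul]
          exact mul_le_of_le_one_right (abs_nonneg _)
            (by rw [abs_of_nonneg (hq.1 j')]; exact mem_stdSimplex_le_one hq j')
  have h1 : p ⬝ᵥ A.mulVec q = ∑ i, p i * A.mulVec q i := by
    simp [dotProduct]
  rw [h1]
  calc |∑ i, p i * A.mulVec q i| ≤ ∑ i, |p i * A.mulVec q i| := Finset.abs_sum_le_sum_abs _ _
    _ ≤ ∑ i, ∑ j', |A i j'| := by
        refine Finset.sum_le_sum fun i _ => ?_
        rw [abs_mul, abs_of_nonneg (hp.1 i)]
        exact mul_le_of_le_one_left (by positivity)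
          (mem_stdSimplex_le_one hp i) |>.trans (hAq i)

lemma dot_le_sup' {m : ℕ} [NeZero m] {p : Fin m → ℝ} (hp : p ∈ stdSimplex ℝ (Fin m))
    (x : Fin m → ℝ) :
    p ⬝ᵥ x ≤ Finset.univ.sup' Finset.univ_nonempty x := by
  have h1 : p ⬝ᵥ x = ∑ i, p i * x i := by simp [dotProduct]
  rw [h1]
  calc ∑ i, p i * x i ≤ ∑ i, p i * Finset.univ.sup' Finset.univ_nonempty x :=
        Finset.sum_le_sum fun i _ =>
          mul_le_mul_of_nonneg_left (Finset.le_sup' x (Finset.mem_univ i)) (hp.1 i)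
    _ = Finset.univ.sup' Finset.univ_nonempty x := by rw [← Finset.sum_mul, hp.2, one_mul]

lemma inf'_le_dot {m : ℕ} [NeZero m] {q : Fin m → ℝ} (hq : q ∈ stdSimplex ℝ (Fin m))
    (y : Fin m → ℝ) :
    Finset.univ.inf' Finset.univ_nonempty y ≤ y ⬝ᵥ q := by
  have h1 : y ⬝ᵥ q = ∑ j, y j * q j := by simp [dotProduct]
  rw [h1]
  calc Finset.univ.inf' Finset.univ_nonempty y
      = ∑ j, Finset.univ.inf' Finset.univ_nonempty y * q j := by
        rw [← Finset.mul_sum, hq.2, mul_one]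
    _ ≤ ∑ j, y j * q j :=
        Finset.sum_le_sum fun j _ =>
          mul_le_mul_of_nonneg_right (Finset.inf'_le y (Finset.mem_univ j)) (hq.1 j)

lemma exists_simplex_row {n : ℕ} (hn : 1 ≤ n) (A : Matrix (Fin 4) (Fin n) ℝ) (v : ℝ)
    (hv : ∀ q ∈ stdSimplex ℝ (Fin n), ∃ i, v ≤ A.mulVec q i) :
    ∃ p ∈ stdSimplex ℝ (Fin 4), ∀ j, v ≤ Matrix.vecMul p A j := by
  haveI : Nonempty (Fin n) := ⟨⟨0, hn⟩⟩
  set D : Set (Fin 4 → ℝ) := {x | ∀ i, x i < v} with hD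
  set K : Set (Fin 4 → ℝ) := A.mulVec '' stdSimplex ℝ (Fin n) with hK
  have hD_eq : D = ⋂ i, {x : Fin 4 → ℝ | x i < v} := by
    ext x; simp [hD]
  have hD_open : IsOpen D := by
    rw [hD_eq]
    exact isOpen_iInter_of_finite fun i => isOpen_lt (continuous_apply i) continuous_const
  have hD_conv : Convex ℝ D := by
    rw [hD_eq]
    exact convex_iInter fun i =>
      convex_halfSpace_lt ⟨fun x y => rfl, fun c x => rfl⟩ v
  have hK_conv : Convex ℝ K :=
    (convex_stdSimplex ℝ (Fin n)).is_linear_image ⟨fun x y => A.mulVec_add x y, fun c x => A.mulVec_smul c x⟩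
  have hdisj : Disjoint D K := by
    rw [Set.disjoint_left]
    rintro x hx ⟨q, hq, rfl⟩
    obtain ⟨i, hi⟩ := hv q hq
    exact absurd (hx i) (not_lt.2 hi)
  obtain ⟨φ, u, hφD, hφK⟩ := geometric_hahn_banach_open hD_conv hD_open hK_conv hdisj
  set p : Fin 4 → ℝ := fun i => φ (Pi.single i 1) with hpdef
  have hrep : ∀ x : Fin 4 → ℝ, φ x = ∑ i, x i * p i := by
    intro x
    have hx : x = ∑ i, x i • (Pi.single i 1 : Fin 4 → ℝ) := by
      ext j
      simp [Pi.single_apply, Finset.sum_apply]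
    conv_lhs => rw [hx]
    rw [map_sum]
    simp [smul_eq_mul]; rfl
  have hcmem : ∀ w : ℝ, w < v → (fun _ : Fin 4 => w) ∈ D := fun w hw i => hw
  have hpnonneg : ∀ i, 0 ≤ p i := by
    intro i
    by_contra h
    push_neg at h
    set s := -p i with hs
    have hs0 : 0 < s := by simp [hs]; linarith
    set c : Fin 4 → ℝ := fun _ => v - 1 with hc
    set t : ℝ := max 0 ((u - φ c) / s) + 1 with ht
    have ht0 : 0 ≤ t := by positivity
    have hmem : (c - t • (Pi.single i 1 : Fin 4 → ℝ)) ∈ D := by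
      intro j
      simp only [Pi.sub_apply, Pi.smul_apply, smul_eq_mul, hc]
      rcases eq_or_ne j i with rfl | hji
      · simp; nlinarith
      · simp [Pi.single_apply, hji]
    have hlt := hφD _ hmem
    rw [map_sub, _root_.map_smul] at hlt
    have hφsingle : φ (Pi.single i 1) = p i := rfl
    rw [hφsingle, smul_eq_mul] at hlt
    have hts : (u - φ c) / s * s = u - φ c := div_mul_cancel₀ _ (ne_of_gt hs0)
    have htge : (u - φ c) / s ≤ max 0 ((u - φ c) / s) := le_max_right _ _
    have h4 : u - φ c + s ≤ t * s := by
      have h6 : ((u - φ c) / s + 1) * s ≤ t * s :=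
        mul_le_mul_of_nonneg_right (by rw [ht]; linarith) hs0.le
      calc u - φ c + s = ((u - φ c) / s + 1) * s := by rw [add_mul, hts, one_mul]
        _ ≤ t * s := h6
    have h5 : t * s = -(t * p i) := by rw [hs]; ring
    linarith
  have hKne : A.mulVec (Pi.single ⟨0, hn⟩ 1) ∈ K :=
    Set.mem_image_of_mem _ (single_mem_stdSimplex ℝ _)
  set σ := ∑ i, p i with hσdef
  have hσnonneg : 0 ≤ σ := Finset.sum_nonneg fun i _ => hpnonneg i
  have hσpos : 0 < σ := by
    rcases hσnonneg.lt_or_eq with h | h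
    · exact h
    · exfalso
      have hall : ∀ i ∈ Finset.univ, p i = 0 := by
        rw [← Finset.sum_eq_zero_iff_of_nonneg fun i _ => hpnonneg i]
        exact h.symm
      have hφ0 : ∀ x, φ x = 0 := by
        intro x; rw [hrep]
        exact Finset.sum_eq_zero fun i _ => by rw [hall i (Finset.mem_univ i), mul_zero]
      have h1 := hφD _ (hcmem (v - 1) (by linarith))
      have h2 := hφK _ hKne
      rw [hφ0] at h1; rw [hφ0] at h2
      linarith
  have hσv : σ * v ≤ u := by
    by_contra h
    push_neg at h
    set ε := (σ * v - u) / (2 * σ) with hε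
    have hε0 : 0 < ε := by apply div_pos <;> nlinarith
    have h1 := hφD _ (hcmem (v - ε) (by linarith))
    have h2 : φ (fun _ : Fin 4 => v - ε) = (v - ε) * σ := by
      rw [hrep, hσdef, Finset.mul_sum]
    rw [h2] at h1
    have h3 : ε * σ = (σ * v - u) / 2 := by
      rw [hε, div_mul_eq_mul_div, mul_div_mul_right _ _ (ne_of_gt hσpos)]
    nlinarith
  refine ⟨fun i => p i / σ, ⟨fun i => div_nonneg (hpnonneg i) hσnonneg, ?_⟩, ?_⟩
  · rw [← Finset.sum_div, ← hσdef, div_self (ne_of_gt hσpos)]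
  · intro j
    have hAe : A.mulVec (Pi.single j 1) = fun i => A i j := by
      ext i; rw [Matrix.mulVec_single]; simp
    have hKj : u ≤ φ (A.mulVec (Pi.single j 1)) :=
      hφK _ (Set.mem_image_of_mem _ (single_mem_stdSimplex ℝ j))
    rw [hAe, hrep] at hKj
    have hvm : Matrix.vecMul (fun i => p i / σ) A j = (∑ i, A i j * p i) / σ := by
      simp only [Matrix.vecMul, dotProduct]
      rw [Finset.sum_div]
      exact Finset.sum_congr rfl fun i _ => by ring
    rw [hvm, le_div_iff₀ hσpos]
    calc v * σ = σ * v := by ring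
      _ ≤ u := hσv
      _ ≤ ∑ i, A i j * p i := hKj

/-- The lower value `v̲ = sup_{p ∈ P} min_j (pᵀA)ⱼ` equals the upper value
`v̄ = inf_{q ∈ Δₙ} sup_{p ∈ P} pᵀAq` if and only if the maximum over `Δ₄` of
`p ↦ min_j (pᵀA)ⱼ` is attained at a point of product form. -/
theorem lowerValue_eq_upperValue_iff (n : ℕ) (hn : 1 ≤ n)
    (A : Matrix (Fin 4) (Fin n) ℝ) :
    (⨆ p : productMixtures, ⨅ j : Fin n, Matrix.vecMul (p : Fin 4 → ℝ) A j) =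
      (⨅ q : stdSimplex ℝ (Fin n), ⨆ p : productMixtures,
        (p : Fin 4 → ℝ) ⬝ᵥ A.mulVec (q : Fin n → ℝ)) ↔
    ∃ p ∈ productMixtures,
      (⨅ j : Fin n, Matrix.vecMul p A j) =
        ⨆ p' : stdSimplex ℝ (Fin 4), ⨅ j : Fin n,
          Matrix.vecMul (p' : Fin 4 → ℝ) A j := by
  haveI : NeZero n := ⟨Nat.one_le_iff_ne_zero.mp hn⟩
  haveI hNE : Nonempty (Fin n) := ⟨⟨0, hn⟩⟩
  haveI : Nonempty productMixtures := ⟨⟨_, single_mem_productMixtures 0⟩⟩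
  haveI : Nonempty (stdSimplex ℝ (Fin 4)) := ⟨⟨_, single_mem_stdSimplex ℝ 0⟩⟩
  haveI : Nonempty (stdSimplex ℝ (Fin n)) := ⟨⟨_, single_mem_stdSimplex ℝ 0⟩⟩
  set C := ∑ i, ∑ j', |A i j'| with hC
  have hFinf : ∀ p : Fin 4 → ℝ, (⨅ j : Fin n, Matrix.vecMul p A j)
      = Finset.univ.inf' Finset.univ_nonempty (fun j => Matrix.vecMul p A j) :=
    fun p => (Finset.inf'_univ_eq_ciInf _).symm
  have hFcont : Continuous fun p : Fin 4 → ℝ => ⨅ j : Fin n, Matrix.vecMul p A j := by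
    have hc : ∀ j : Fin n, Continuous fun p : Fin 4 → ℝ => Matrix.vecMul p A j := by
      intro j
      simp only [Matrix.vecMul, dotProduct]
      exact continuous_finset_sum _ fun i _ => (continuous_apply i).mul continuous_const
    simp only [hFinf]
    exact Continuous.finset_inf'_apply Finset.univ_nonempty fun j _ => hc j
  have hFle : ∀ p ∈ stdSimplex ℝ (Fin 4), (⨅ j : Fin n, Matrix.vecMul p A j) ≤ C := by
    intro p hp
    exact (ciInf_le (Set.Finite.bddBelow (Set.finite_range _)) ⟨0, hn⟩).trans
      (vecMul_le_bound hp _)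
  have hbdd4 : BddAbove (Set.range fun p' : stdSimplex ℝ (Fin 4) =>
      ⨅ j : Fin n, Matrix.vecMul (p' : Fin 4 → ℝ) A j) := by
    refine ⟨C, ?_⟩; rintro _ ⟨p', rfl⟩; exact hFle _ p'.2
  have hbddP : BddAbove (Set.range fun p : productMixtures =>
      ⨅ j : Fin n, Matrix.vecMul (p : Fin 4 → ℝ) A j) := by
    refine ⟨C, ?_⟩; rintro _ ⟨p, rfl⟩; exact hFle _ (productMixtures_subset p.2)
  set S4 := ⨆ p' : stdSimplex ℝ (Fin 4), ⨅ j : Fin n,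
    Matrix.vecMul (p' : Fin 4 → ℝ) A j with hS4
  set SP := ⨆ p : productMixtures, ⨅ j : Fin n,
    Matrix.vecMul (p : Fin 4 → ℝ) A j with hSP
  have hSPle : SP ≤ S4 :=
    ciSup_le fun p => le_ciSup hbdd4 ⟨(p : Fin 4 → ℝ), productMixtures_subset p.2⟩
  obtain ⟨p₀, hp₀P, hp₀max⟩ := isCompact_productMixtures.exists_isMaxOn
    ⟨_, single_mem_productMixtures 0⟩ hFcont.continuousOn
  have hSPeq : SP = ⨅ j : Fin n, Matrix.vecMul p₀ A j :=
    le_antisymm (ciSup_le fun p => hp₀max p.2) (le_ciSup hbddP ⟨p₀, hp₀P⟩)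
  have hGbdd : ∀ q : Fin n → ℝ, q ∈ stdSimplex ℝ (Fin n) → BddAbove (Set.range
      fun p : productMixtures => (p : Fin 4 → ℝ) ⬝ᵥ A.mulVec q) := by
    intro q hq
    refine ⟨C, ?_⟩; rintro _ ⟨p, rfl⟩
    exact (le_abs_self _).trans (abs_dot_le_bound (productMixtures_subset p.2) hq)
  set VU := ⨅ q : stdSimplex ℝ (Fin n), ⨆ p : productMixtures,
    (p : Fin 4 → ℝ) ⬝ᵥ A.mulVec (q : Fin n → ℝ) with hVU
  have hA : S4 ≤ VU := by
    refine le_ciInf fun q => ?_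
    refine ciSup_le fun p' => ?_
    have h1 : (⨅ j : Fin n, Matrix.vecMul (p' : Fin 4 → ℝ) A j)
        ≤ (p' : Fin 4 → ℝ) ⬝ᵥ A.mulVec (q : Fin n → ℝ) := by
      rw [dotProduct_mulVec, hFinf]
      exact inf'_le_dot q.2 _
    obtain ⟨i, -, hi⟩ := Finset.exists_mem_eq_sup' (Finset.univ_nonempty)
      (fun i => A.mulVec (q : Fin n → ℝ) i)
    have h2 : (p' : Fin 4 → ℝ) ⬝ᵥ A.mulVec (q : Fin n → ℝ)
        ≤ A.mulVec (q : Fin n → ℝ) i := by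
      have h := dot_le_sup' p'.2 (A.mulVec (q : Fin n → ℝ))
      rw [hi] at h
      exact h
    have h3 : A.mulVec (q : Fin n → ℝ) i
        = (Pi.single i 1 : Fin 4 → ℝ) ⬝ᵥ A.mulVec (q : Fin n → ℝ) := by
      simp [dotProduct, Pi.single_apply, ite_mul]
    have h4 : (Pi.single i 1 : Fin 4 → ℝ) ⬝ᵥ A.mulVec (q : Fin n → ℝ) ≤
        ⨆ p : productMixtures, (p : Fin 4 → ℝ) ⬝ᵥ A.mulVec (q : Fin n → ℝ) :=
      le_ciSup (hGbdd _ q.2) ⟨Pi.single i 1, single_mem_productMixtures i⟩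
    calc (⨅ j : Fin n, Matrix.vecMul (p' : Fin 4 → ℝ) A j)
        ≤ (p' : Fin 4 → ℝ) ⬝ᵥ A.mulVec (q : Fin n → ℝ) := h1
      _ ≤ A.mulVec (q : Fin n → ℝ) i := h2
      _ = (Pi.single i 1 : Fin 4 → ℝ) ⬝ᵥ A.mulVec (q : Fin n → ℝ) := h3
      _ ≤ _ := h4
  have hB : VU ≤ S4 := by
    have hhcont : Continuous fun q : Fin n → ℝ =>
        Finset.univ.sup' Finset.univ_nonempty (fun i => A.mulVec q i) := by
      refine Continuous.finset_sup'_apply Finset.univ_nonempty fun i _ => ?_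
      simp only [Matrix.mulVec, dotProduct]
      exact continuous_finset_sum _ fun j _ => continuous_const.mul (continuous_apply j)
    obtain ⟨q₀, hq₀, hq₀min⟩ := (isCompact_stdSimplex ℝ (Fin n)).exists_isMinOn
      ⟨_, single_mem_stdSimplex ℝ 0⟩ hhcont.continuousOn
    set v := Finset.univ.sup' Finset.univ_nonempty (fun i => A.mulVec q₀ i) with hv
    obtain ⟨pstar, hpstar, hrow⟩ := exists_simplex_row hn A v (by
      intro q hq
      obtain ⟨i, -, hi⟩ := Finset.exists_mem_eq_sup' (Finset.univ_nonempty)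
        (fun i => A.mulVec q i)
      exact ⟨i, le_of_le_of_eq (hq₀min hq) hi⟩)
    have hbb : BddBelow (Set.range fun q : stdSimplex ℝ (Fin n) =>
        ⨆ p : productMixtures, (p : Fin 4 → ℝ) ⬝ᵥ A.mulVec (q : Fin n → ℝ)) := by
      refine ⟨-C, ?_⟩
      rintro _ ⟨q, rfl⟩
      have hle := le_ciSup (hGbdd _ q.2)
        (⟨Pi.single 0 1, single_mem_productMixtures 0⟩ : productMixtures)
      refine le_trans ?_ hle
      have habs := abs_dot_le_bound
        (productMixtures_subset (single_mem_productMixtures 0)) q.2 (A := A)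
      have := neg_abs_le ((Pi.single 0 1 : Fin 4 → ℝ) ⬝ᵥ A.mulVec (q : Fin n → ℝ))
      exact (neg_le_neg habs).trans (neg_abs_le _)
    have h1 : VU ≤ ⨆ p : productMixtures, (p : Fin 4 → ℝ) ⬝ᵥ A.mulVec q₀ :=
      ciInf_le hbb ⟨q₀, hq₀⟩
    have h2 : (⨆ p : productMixtures, (p : Fin 4 → ℝ) ⬝ᵥ A.mulVec q₀) ≤ v := by
      rw [hv]
      refine ciSup_le fun p => ?_
      exact dot_le_sup' (productMixtures_subset p.2) (A.mulVec q₀)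
    have h3 : v ≤ S4 := by
      have hFp : v ≤ ⨅ j : Fin n, Matrix.vecMul pstar A j := le_ciInf fun j => hrow j
      exact hFp.trans (le_ciSup hbdd4 ⟨pstar, hpstar⟩)
    linarith
  have hVS : VU = S4 := le_antisymm hB hA
  constructor
  · intro hEq
    refine ⟨p₀, hp₀P, ?_⟩
    rw [← hSPeq, hEq]
    exact hVS
  · rintro ⟨p, hpP, hpEq⟩
    have h1 : S4 ≤ SP := by
      rw [← hpEq]
      exact le_ciSup hbddP ⟨p, hpP⟩
    rw [hVS]
    exact le_antisymm hSPle h1
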